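/- The second singular value s₂ : M₃(ℂ) → ℂ is not 2-positive: for a = diag(1,1,3), b = diag(3,1,1), c = diag(√3, 1, √3), the block matrix [[a, c],[c, b]] is positive semidefinite but the matrix [[s₂(a), s₂(c)],[s₂(c), s₂(b)]] = [[1, √3],[√3, 1]] is not positive semidefinite. -/

import Mathlib

open Matrix BigOperators Finset
open scoped ComplexOrder

/-- The `i`-th largest eigenvalue (0-indexed) of a Hermitian matrix. -/
noncomputable def eigDesc {n : ℕ} (a : Matrix (Fin n) (Fin n) ℂ) (ha : a.IsHermitian) (i : Fin n) : ℝ :=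
  ha.eigenvalues (Tuple.sort ha.eigenvalues i.rev)

/-- Eigenvalues in decreasing order, extended by `0` beyond the size. `eigN a ha i = λ_{i+1}(a)`. -/
noncomputable def eigN {n : ℕ} (a : Matrix (Fin n) (Fin n) ℂ) (ha : a.IsHermitian) (i : ℕ) : ℝ :=
  if h : i < n then eigDesc a ha ⟨i, h⟩ else 0

/-- The non-linear trace of Choquet type:
`φ_α(a) = ∑_{i=1}^{n-1} (λ_i(a) - λ_{i+1}(a)) α(i) + λ_n(a) α(n)`. -/
noncomputable def choquetTrace {n : ℕ} (α : ℕ → ℝ) (a : Matrix (Fin n) (Fin n) ℂ)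
    (ha : a.IsHermitian) : ℝ :=
  ∑ i ∈ Finset.range n, (eigN a ha i - eigN a ha (i + 1)) * α (i + 1)

/-- Functional calculus of a Hermitian matrix `a` by a function `f : ℝ → ℝ` on its eigenvalues. -/
noncomputable def funCalc {n : ℕ} (f : ℝ → ℝ) (a : Matrix (Fin n) (Fin n) ℂ)
    (ha : a.IsHermitian) : Matrix (Fin n) (Fin n) ℂ :=
  (ha.eigenvectorUnitary : Matrix (Fin n) (Fin n) ℂ) *
    Matrix.diagonal (fun i => (f (ha.eigenvalues i) : ℂ)) *
    star (ha.eigenvectorUnitary : Matrix (Fin n) (Fin n) ℂ)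

/-- The absolute value `|a| = (a^* a)^{1/2}` of a matrix. -/
noncomputable def matAbs {n : ℕ} (a : Matrix (Fin n) (Fin n) ℂ) : Matrix (Fin n) (Fin n) ℂ :=
  (Matrix.posSemidef_conjTranspose_mul_self a).1.eigenvectorUnitary.1 *
    diagonal ((↑) ∘ (√·) ∘ (Matrix.posSemidef_conjTranspose_mul_self a).1.eigenvalues) *
    (star (Matrix.posSemidef_conjTranspose_mul_self a).1.eigenvectorUnitary : Matrix (Fin n) (Fin n) ℂ)

theorem matAbs_isHermitian {n : ℕ} (a : Matrix (Fin n) (Fin n) ℂ) : (matAbs a).IsHermitian :=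
  Matrix.isHermitian_mul_mul_conjTranspose _
    (Matrix.isHermitian_diagonal_of_self_adjoint _ (by ext i; simp))

/-- The second largest singular value of a `3 × 3` complex matrix. -/
noncomputable def s2 (a : Matrix (Fin 3) (Fin 3) ℂ) : ℝ := eigN (matAbs a) (matAbs_isHermitian a) 1

/- ### Auxiliary lemmas -/

lemma matAbs_diag (d : Fin 3 → ℝ) (hd : ∀ i, 0 ≤ d i) :
    matAbs (Matrix.diagonal (fun i => (d i : ℂ))) = Matrix.diagonal (fun i => (d i : ℂ)) := by
  set A := Matrix.diagonal (fun i => (d i : ℂ)) with hA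
  have hpsd : A.PosSemidef := by
    refine Matrix.posSemidef_diagonal_iff.mpr fun i => ?_
    exact_mod_cast Complex.zero_le_real.mpr (hd i)
  have hH : A.IsHermitian := hpsd.1
  have h1 : matAbs A = cfc Real.sqrt (Aᴴ * A) := by
    rw [(Matrix.posSemidef_conjTranspose_mul_self A).1.cfc_eq, IsHermitian.cfc,
      Unitary.conjStarAlgAut_apply]
    rfl
  rw [h1, hH.eq, ← pow_two, ← cfc_comp_pow (f := Real.sqrt) (n := 2) (a := A)
    (hf := Real.continuous_sqrt.continuousOn) (ha := hH.isSelfAdjoint)]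
  have h2 : cfc (fun t : ℝ => Real.sqrt (t ^ 2)) A = cfc (id : ℝ → ℝ) A := by
    refine cfc_congr (fun t ht => ?_)
    rw [← spectrum.algebraMap_mem_iff ℂ, hA, spectrum_diagonal] at ht
    obtain ⟨j, hj⟩ := ht
    have htj : t = d j := by
      have : ((d j : ℝ) : ℂ) = ((t : ℝ) : ℂ) := hj
      exact_mod_cast this.symm
    rw [htj]
    exact Real.sqrt_sq (hd j)
  rw [h2, cfc_id ℝ A hH.isSelfAdjoint]

lemma eig_mem {n : ℕ} (d : Fin n → ℝ)
    (h : (Matrix.diagonal (fun i => (d i : ℂ))).IsHermitian) (i : Fin n) :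
    ∃ j, h.eigenvalues i = d j := by
  have h1 := h.eigenvalues_mem_spectrum_real i
  rw [← spectrum.algebraMap_mem_iff ℂ, spectrum_diagonal] at h1
  obtain ⟨j, hj⟩ := h1
  refine ⟨j, ?_⟩
  have : ((h.eigenvalues i : ℂ)) = ((d j : ℂ)) := hj.symm
  exact_mod_cast this

lemma eig_prod {n : ℕ} (d : Fin n → ℝ)
    (h : (Matrix.diagonal (fun i => (d i : ℂ))).IsHermitian) :
    ∏ i, h.eigenvalues i = ∏ i, d i := by
  have h1 := h.det_eq_prod_eigenvalues
  rw [Matrix.det_diagonal] at h1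
  have : ((∏ i, d i : ℝ) : ℂ) = ((∏ i, h.eigenvalues i : ℝ) : ℂ) := by push_cast; exact h1
  exact_mod_cast this.symm

lemma s2_diag (d : Fin 3 → ℝ) (hd : ∀ i, 0 ≤ d i) (r : ℝ)
    (hr : ∀ g : Fin 3 → ℝ, Monotone g → (∀ i, ∃ j, g i = d j) →
           g 0 * g 1 * g 2 = d 0 * d 1 * d 2 → g 1 = r) :
    s2 (Matrix.diagonal (fun i => (d i : ℂ))) = r := by
  have key : ∀ (x : Matrix (Fin 3) (Fin 3) ℂ) (hx : x.IsHermitian),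
      x = Matrix.diagonal (fun i => (d i : ℂ)) → eigN x hx 1 = r := by
    rintro x hx rfl
    have h1 : (1 : ℕ) < 3 := by norm_num
    rw [eigN, dif_pos h1]
    have hrev : (⟨1, h1⟩ : Fin 3).rev = ⟨1, h1⟩ := rfl
    rw [eigDesc, hrev]
    set g : Fin 3 → ℝ := hx.eigenvalues ∘ Tuple.sort hx.eigenvalues with hg
    have mono : Monotone g := Tuple.monotone_sort _
    have hmem : ∀ i, ∃ j, g i = d j := fun i => eig_mem d hx _
    have hprodg : ∏ i, g i = ∏ i, hx.eigenvalues i := Equiv.prod_comp (Tuple.sort hx.eigenvalues) _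
    have hprod : g 0 * g 1 * g 2 = d 0 * d 1 * d 2 := by
      have := hprodg.trans (eig_prod d hx)
      rwa [Fin.prod_univ_three, Fin.prod_univ_three] at this
    exact hr g mono hmem hprod
  exact key _ _ (matAbs_diag d hd)

lemma mid_one_three (g : Fin 3 → ℝ) (mono : Monotone g) (v : ∀ i, g i = 1 ∨ g i = 3)
    (hp : g 0 * g 1 * g 2 = 3) : g 1 = 1 := by
  have m12 : g 1 ≤ g 2 := mono (by decide : (1:Fin 3) ≤ 2)
  have m01 : g 0 ≤ g 1 := mono (by decide : (0:Fin 3) ≤ 1)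
  rcases v 0 with h0 | h0 <;> rcases v 1 with h1 | h1 <;> rcases v 2 with h2 | h2 <;>
    rw [h0, h1, h2] at hp <;> first | exact h1 | (exfalso; nlinarith)

lemma mid_sqrt_three (g : Fin 3 → ℝ) (mono : Monotone g)
    (v : ∀ i, g i = Real.sqrt 3 ∨ g i = 1)
    (hp : g 0 * g 1 * g 2 = 3) : g 1 = Real.sqrt 3 := by
  have hs : Real.sqrt 3 * Real.sqrt 3 = 3 := Real.mul_self_sqrt (by norm_num)
  have hs1 : 1 < Real.sqrt 3 := by nlinarith [Real.sqrt_nonneg 3]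
  have m12 : g 1 ≤ g 2 := mono (by decide : (1:Fin 3) ≤ 2)
  have m01 : g 0 ≤ g 1 := mono (by decide : (0:Fin 3) ≤ 1)
  rcases v 0 with h0 | h0 <;> rcases v 1 with h1 | h1 <;> rcases v 2 with h2 | h2 <;>
    rw [h0, h1, h2] at hp <;> first | exact h1 | (exfalso; nlinarith)

lemma blockPSD : (Matrix.fromBlocks
    (Matrix.diagonal ![1, 1, 3]) (Matrix.diagonal ![(Real.sqrt 3 : ℂ), 1, (Real.sqrt 3 : ℂ)])
    (Matrix.diagonal ![(Real.sqrt 3 : ℂ), 1, (Real.sqrt 3 : ℂ)])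
    (Matrix.diagonal ![3, 1, 1])).PosSemidef := by
  set u : Fin 3 → ℂ := ![1, 1, (Real.sqrt 3 : ℂ)] with hu
  set v : Fin 3 → ℂ := ![(Real.sqrt 3 : ℂ), 1, 1] with hv
  set L : Matrix (Fin 3) (Fin 3 ⊕ Fin 3) ℂ :=
    Matrix.fromCols (Matrix.diagonal u) (Matrix.diagonal v) with hL
  have key : Matrix.fromBlocks
      (Matrix.diagonal ![1, 1, 3]) (Matrix.diagonal ![(Real.sqrt 3 : ℂ), 1, (Real.sqrt 3 : ℂ)])
      (Matrix.diagonal ![(Real.sqrt 3 : ℂ), 1, (Real.sqrt 3 : ℂ)]) (Matrix.diagonal ![3, 1, 1])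
      = Lᴴ * L := by
    rw [hL, Matrix.conjTranspose_fromCols_eq_fromRows_conjTranspose,
      Matrix.fromRows_mul_fromCols, Matrix.diagonal_conjTranspose,
      Matrix.diagonal_conjTranspose]
    have s3 : (Real.sqrt 3 : ℂ) * (Real.sqrt 3 : ℂ) = 3 := by
      rw [← Complex.ofReal_mul, Real.mul_self_sqrt (by norm_num)]; norm_num
    have hsu : star u = u := by
      funext i; fin_cases i <;> simp [hu, Complex.conj_ofReal]
    have hsv : star v = v := by
      funext i; fin_cases i <;> simp [hv, Complex.conj_ofReal]
    rw [hsu, hsv, Matrix.diagonal_mul_diagonal, Matrix.diagonal_mul_diagonal,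
      Matrix.diagonal_mul_diagonal, Matrix.diagonal_mul_diagonal]
    have e1 : (fun i => u i * u i) = (![1, 1, 3] : Fin 3 → ℂ) := by
      funext i; fin_cases i <;> simp [hu, s3]
    have e2 : (fun i => u i * v i) = (![(Real.sqrt 3 : ℂ), 1, (Real.sqrt 3 : ℂ)] : Fin 3 → ℂ) := by
      funext i; fin_cases i <;> simp [hu, hv]
    have e3 : (fun i => v i * u i) = (![(Real.sqrt 3 : ℂ), 1, (Real.sqrt 3 : ℂ)] : Fin 3 → ℂ) := by
      funext i; fin_cases i <;> simp [hu, hv]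
    have e4 : (fun i => v i * v i) = (![3, 1, 1] : Fin 3 → ℂ) := by
      funext i; fin_cases i <;> simp [hv, s3]
    rw [e1, e2, e3, e4]
  rw [key]
  exact Matrix.posSemidef_conjTranspose_mul_self L

lemma twoByTwo_not_psd :
    ¬ (!![(1 : ℂ), (Real.sqrt 3 : ℂ); (Real.sqrt 3 : ℂ), (1 : ℂ)]).PosSemidef := by
  intro h
  have h2 := h.dotProduct_mulVec_nonneg ![1, -1]
  have hval : (star ![(1:ℂ), -1]) ⬝ᵥ
      ((!![(1 : ℂ), (Real.sqrt 3 : ℂ); (Real.sqrt 3 : ℂ), (1 : ℂ)]) *ᵥ ![1, -1])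
      = ((2 - 2 * Real.sqrt 3 : ℝ) : ℂ) := by
    simp [Matrix.mulVec, dotProduct, Fin.sum_univ_two]
    ring
  rw [hval] at h2
  rw [Complex.zero_le_real] at h2
  have hs1 : 1 < Real.sqrt 3 := by
    nlinarith [Real.sqrt_nonneg 3, Real.mul_self_sqrt (show (0:ℝ) ≤ 3 by norm_num)]
  linarith

/-- `s₂ : M₃(ℂ) → ℂ` is not 2-positive, witnessed by
`a = diag(1,1,3)`, `b = diag(3,1,1)`, `c = diag(√3,1,√3)`. -/
theorem stmt14 (a b c : Matrix (Fin 3) (Fin 3) ℂ)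
    (hA : a = Matrix.diagonal ![1, 1, 3])
    (hB : b = Matrix.diagonal ![3, 1, 1])
    (hC : c = Matrix.diagonal ![(Real.sqrt 3 : ℂ), 1, (Real.sqrt 3 : ℂ)]) :
    (Matrix.fromBlocks a c c b).PosSemidef ∧
    s2 a = 1 ∧ s2 b = 1 ∧ s2 c = Real.sqrt 3 ∧
    ¬ (!![(s2 a : ℂ), (s2 c : ℂ); (s2 c : ℂ), (s2 b : ℂ)] : Matrix (Fin 2) (Fin 2) ℂ).PosSemidef := by
  subst hA hB hC
  have castA : (![1, 1, 3] : Fin 3 → ℂ) = fun i => ((![1, 1, 3] : Fin 3 → ℝ) i : ℂ) := by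
    funext i; fin_cases i <;> simp
  have castB : (![3, 1, 1] : Fin 3 → ℂ) = fun i => ((![3, 1, 1] : Fin 3 → ℝ) i : ℂ) := by
    funext i; fin_cases i <;> simp
  have castC : (![(Real.sqrt 3 : ℂ), 1, (Real.sqrt 3 : ℂ)] : Fin 3 → ℂ)
      = fun i => ((![Real.sqrt 3, 1, Real.sqrt 3] : Fin 3 → ℝ) i : ℂ) := by
    funext i; fin_cases i <;> simp
  have hs2a : s2 (Matrix.diagonal ![1, 1, 3]) = 1 := by
    rw [castA]
    refine s2_diag _ (fun i => by fin_cases i <;> norm_num) 1 ?_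
    intro g mono hmem hprod
    have v : ∀ i, g i = 1 ∨ g i = 3 := by
      intro i
      obtain ⟨j, hj⟩ := hmem i
      fin_cases j <;> simp at hj <;> tauto
    refine mid_one_three g mono v ?_
    rw [hprod]; simp
  have hs2b : s2 (Matrix.diagonal ![3, 1, 1]) = 1 := by
    rw [castB]
    refine s2_diag _ (fun i => by fin_cases i <;> norm_num) 1 ?_
    intro g mono hmem hprod
    have v : ∀ i, g i = 1 ∨ g i = 3 := by
      intro i
      obtain ⟨j, hj⟩ := hmem i
      fin_cases j <;> simp at hj <;> tauto
    refine mid_one_three g mono v ?_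
    rw [hprod]; simp
  have hs2c : s2 (Matrix.diagonal ![(Real.sqrt 3 : ℂ), 1, (Real.sqrt 3 : ℂ)]) = Real.sqrt 3 := by
    rw [castC]
    refine s2_diag _ (fun i => by fin_cases i <;> simp [Real.sqrt_nonneg]) (Real.sqrt 3) ?_
    intro g mono hmem hprod
    have v : ∀ i, g i = Real.sqrt 3 ∨ g i = 1 := by
      intro i
      obtain ⟨j, hj⟩ := hmem i
      fin_cases j <;> simp at hj <;> tauto
    refine mid_sqrt_three g mono v ?_
    have hs : Real.sqrt 3 * Real.sqrt 3 = 3 := Real.mul_self_sqrt (by norm_num)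
    rw [hprod]
    simp [hs]
  refine ⟨blockPSD, hs2a, hs2b, hs2c, ?_⟩
  rw [hs2a, hs2b, hs2c]
  simpa using twoByTwo_not_psd
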